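/- Let (α_n : n ≥ 0) be a sequence of bounded operators on 𝓗 and let λ ∈ ℝ be such that the limit C(λ) = lim_{n→∞} (1/‖α_n a_n^*‖)·sym([[α_n a_n^*, −(λ·Id − b_n) a_{n-1}^{-1} α_{n-1} a_n], [0, a_n^* a_{n-1}^{-1} α_{n-1} a_n]]) exists in the operator norm and is a strictly positive operator on 𝓗 ⊕ 𝓗. Then there exist an integer N and positive constants c₁, c₂ such that for every nonzero α ∈ 𝓗 ⊕ 𝓗, the generalised eigenvector u associated with λ with (u_0, u_1)ᵗ = α satisfies for every n ≥ N: c₁·‖α_n a_n^*‖·(‖u_n‖² + ‖u_{n+1}‖²) ≤ S_n(α, λ) ≤ c₂·‖α_n a_n^*‖·(‖u_n‖² + ‖u_{n+1}‖²). -/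

import Mathlib

open ContinuousLinearMap Filter
open scoped ENNReal NNReal
noncomputable section

variable {H : Type*} [NormedAddCommGroup H] [InnerProductSpace ℂ H] [CompleteSpace H]

/-- The Hilbert space direct sum `𝓗 ⊕ 𝓗`. -/
abbrev H2 (H : Type*) [NormedAddCommGroup H] [InnerProductSpace ℂ H] : Type _ :=
  WithLp 2 (H × H)

/-- The column vector `(x, y)ᵗ` as an element of `𝓗 ⊕ 𝓗`. -/
def pr (x y : H) : H2 H := (WithLp.equiv 2 (H × H)).symm (x, y)

/-- The block operator `[[A, B], [C, D]]` on `𝓗 ⊕ 𝓗`. -/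
def blk (A B C D : H →L[ℂ] H) : H2 H →L[ℂ] H2 H :=
  ((WithLp.prodContinuousLinearEquiv 2 ℂ H H).symm : (H × H) →L[ℂ] H2 H) ∘L
    ((A ∘L ContinuousLinearMap.fst ℂ H H + B ∘L ContinuousLinearMap.snd ℂ H H).prod
      (C ∘L ContinuousLinearMap.fst ℂ H H + D ∘L ContinuousLinearMap.snd ℂ H H)) ∘L
    ((WithLp.prodContinuousLinearEquiv 2 ℂ H H) : H2 H →L[ℂ] (H × H))

/-- The real part `sym X = (X + X^*)/2` of a bounded operator. -/
def sym {E : Type*} [NormedAddCommGroup E] [InnerProductSpace ℂ E] [CompleteSpace E]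
    (X : E →L[ℂ] E) : E →L[ℂ] E :=
  (2 : ℂ)⁻¹ • (X + ContinuousLinearMap.adjoint X)

/-- `X` is strictly positive: `⟨Xv, v⟩ ≥ c‖v‖²` for some `c > 0`. -/
def StrictlyPos {E : Type*} [NormedAddCommGroup E] [InnerProductSpace ℂ E] [CompleteSpace E]
    (X : E →L[ℂ] E) : Prop :=
  ∃ c > (0 : ℝ), ∀ v : E, c * ‖v‖ ^ 2 ≤ (inner ℂ (X v) v : ℂ).re

/-- `X'` is a two-sided bounded inverse of `X`. -/
def Inverts (X X' : H →L[ℂ] H) : Prop := X' ∘L X = 1 ∧ X ∘L X' = 1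

/-- The formal Jacobi matrix `𝒜`: `(𝒜u)₀ = b₀u₀ + a₀u₁`,
`(𝒜u)ₙ = aₙ₋₁^* uₙ₋₁ + bₙ uₙ + aₙ uₙ₊₁` for `n ≥ 1`. -/
def jacobiA (a b : ℕ → H →L[ℂ] H) (u : ℕ → H) : ℕ → H
  | 0 => b 0 (u 0) + a 0 (u 1)
  | n + 1 => adjoint (a n) (u n) + b (n + 1) (u (n + 1)) + a (n + 1) (u (n + 2))

/-- The generalised eigenvector recurrence
`aₙ₋₁^* uₙ₋₁ + bₙ uₙ + aₙ uₙ₊₁ = z uₙ` for all `n ≥ 1`. -/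
def GenEigRec (a b : ℕ → H →L[ℂ] H) (z : ℂ) (u : ℕ → H) : Prop :=
  ∀ n : ℕ, adjoint (a n) (u n) + b (n + 1) (u (n + 1)) + a (n + 1) (u (n + 2)) = z • u (n + 1)

/-- `u` is a generalised eigenvector associated with `z`. -/
def IsGenEig (a b : ℕ → H →L[ℂ] H) (z : ℂ) (u : ℕ → H) : Prop :=
  u ≠ 0 ∧ GenEigRec a b z u

/-- `u` belongs to `ℓ²(ℕ; 𝓗)`. -/
def MemL2 (u : ℕ → H) : Prop := Summable fun n => ‖u n‖ ^ 2

/-- The transfer matrix `Bₙ(z)`; here `a'` is the sequence of inverses `aₙ⁻¹`. -/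
def transfer (a a' b : ℕ → H →L[ℂ] H) (z : ℂ) (n : ℕ) : H2 H →L[ℂ] H2 H :=
  blk 0 1 (-(a' n ∘L adjoint (a (n - 1)))) (a' n ∘L (z • (1 : H →L[ℂ] H) - b n))

/-- `prodD B n k = B (n+k-1) ∘ ⋯ ∘ B n`. -/
def prodD (B : ℕ → (H2 H →L[ℂ] H2 H)) : ℕ → ℕ → (H2 H →L[ℂ] H2 H)
  | _, 0 => 1
  | n, k + 1 => B (n + k) ∘L prodD B n k

/-- `sym (diag(a_{n+N-1}, a_{n+N-1}^*) · E · Xₙ(z))` where `Xₙ(z) = B_{n+N-1}(z)⋯Bₙ(z)`. -/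
def turanOp (a a' b : ℕ → H →L[ℂ] H) (N : ℕ) (z : ℂ) (n : ℕ) : H2 H →L[ℂ] H2 H :=
  sym (blk (a (n + N - 1)) 0 0 (adjoint (a (n + N - 1))) ∘L blk 0 (-1) 1 0 ∘L
    prodD (transfer a a' b z) n N)

/-- The `N`-shifted Turán determinant `Sₙ(α, z)` of a generalised eigenvector `u`. -/
def turanS (a a' b : ℕ → H →L[ℂ] H) (N : ℕ) (z : ℂ) (u : ℕ → H) (n : ℕ) : ℝ :=
  (inner ℂ (turanOp a a' b N z n (pr (u (n - 1)) (u n))) (pr (u (n - 1)) (u n)) : ℂ).re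

/-- The family `{Q^z : z ∈ K}` is uniformly non-degenerated on `K`, where
`Qₙ^z(v) = ‖a_{n+N-1}‖⁻¹ ⟨sym(diag(a_{n+N-1}, a_{n+N-1}^*)·E·Xₙ(z)) v, v⟩`. -/
def UnifNonDeg (a a' b : ℕ → H →L[ℂ] H) (N : ℕ) (K : Set ℂ) : Prop :=
  ∃ c ≥ (1 : ℝ), ∃ M : ℕ, 1 ≤ M ∧ ∀ v : H2 H, ∀ z ∈ K, ∀ n : ℕ, M ≤ n →
    c⁻¹ * ‖v‖ ^ 2 ≤ |‖a (n + N - 1)‖⁻¹ * (inner ℂ (turanOp a a' b N z n v) v : ℂ).re| ∧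
    |‖a (n + N - 1)‖⁻¹ * (inner ℂ (turanOp a a' b N z n v) v : ℂ).re| ≤ c * ‖v‖ ^ 2

/-- The matrix `𝓑ᵢ(z) = [[0, Id], [−Rᵢ, z Tᵢ − Qᵢ]]`. -/
def calB (T Q R : ℕ → H →L[ℂ] H) (z : ℂ) (i : ℕ) : H2 H →L[ℂ] H2 H :=
  blk 0 1 (-(R i)) (z • T i - Q i)

/-- `ℱ(λ) = sym([[0, −C_{N-1}], [C_{N-1}^*, 0]] · 𝓑_{N-1}(λ)⋯𝓑₀(λ))` from Theorem B. -/
def calF (T Q R C : ℕ → H →L[ℂ] H) (N : ℕ) (lam : ℝ) : H2 H →L[ℂ] H2 H :=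
  sym (blk 0 (-(C (N - 1))) (adjoint (C (N - 1))) 0 ∘L prodD (calB T Q R (lam : ℂ)) 0 N)

/-- The quadratic-form operator of the commutator approach (`al` is the sequence `α`):
`sym [[α_{n-1} a_{n-1}^*, −α_{n-1}(λ − bₙ)], [0, αₙ aₙ^*]]`. -/
def commOp (a b al : ℕ → H →L[ℂ] H) (lam : ℝ) (n : ℕ) : H2 H →L[ℂ] H2 H :=
  sym (blk (al (n - 1) ∘L adjoint (a (n - 1)))
    (-(al (n - 1) ∘L ((lam : ℂ) • (1 : H →L[ℂ] H) - b n))) 0 (al n ∘L adjoint (a n)))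

/-- `Sₙ(α, λ)` of the commutator approach. -/
def commS (a b al : ℕ → H →L[ℂ] H) (lam : ℝ) (u : ℕ → H) (n : ℕ) : ℝ :=
  (inner ℂ (commOp a b al lam n (pr (u (n - 1)) (u n))) (pr (u (n - 1)) (u n)) : ℂ).re

/-- `sym [[αₙ aₙ^*, −(λ − bₙ) aₙ₋₁⁻¹ αₙ₋₁ aₙ], [0, aₙ^* aₙ₋₁⁻¹ αₙ₋₁ aₙ]]`;
its normalisation converges to `C(λ)`. -/
def climOp (a a' b al : ℕ → H →L[ℂ] H) (lam : ℝ) (n : ℕ) : H2 H →L[ℂ] H2 H :=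
  sym (blk (al n ∘L adjoint (a n))
    (-((((lam : ℂ) • (1 : H →L[ℂ] H) - b n)) ∘L a' (n - 1) ∘L al (n - 1) ∘L a n))
    0
    (adjoint (a n) ∘L a' (n - 1) ∘L al (n - 1) ∘L a n))

/-- Consecutive pairs `(uₙ, uₙ₊₁)` of the generalised eigenvector with initial data `α`. -/
def genPair (a a' b : ℕ → H →L[ℂ] H) (z : ℂ) (α : H2 H) : ℕ → H × H
  | 0 => (WithLp.equiv 2 (H × H)) α
  | n + 1 =>
      let p := genPair a a' b z α n
      (p.2, a' (n + 1) (z • p.2 - b (n + 1) p.2 - adjoint (a n) p.1))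

/-- The generalised eigenvector with initial data `(u₀, u₁)ᵗ = α`. -/
def genVec (a a' b : ℕ → H →L[ℂ] H) (z : ℂ) (α : H2 H) (n : ℕ) : H :=
  (genPair a a' b z α n).1

/-- Iterated logarithm `log^{(i)}`. -/
def iterLog : ℕ → ℝ → ℝ
  | 0, x => x
  | i + 1, x => Real.log (iterLog i x)

/-- `g_j(x) = ∏_{i=1}^j log^{(i)}(x)`. -/
def gfun (j : ℕ) (x : ℝ) : ℝ := ∏ i ∈ Finset.Icc 1 j, iterLog i x


section AuxiliaryLemmas

omit [CompleteSpace H] in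
lemma aux_blk_pr (A B C D : H →L[ℂ] H) (x y : H) :
    blk A B C D (pr x y) = pr (A x + B y) (C x + D y) := rfl

omit [CompleteSpace H] in
lemma aux_inner_pr (x y x' y' : H) :
    (inner ℂ (pr x y) (pr x' y') : ℂ) = inner ℂ x x' + inner ℂ y y' :=
  WithLp.prod_inner_apply _ _

omit [CompleteSpace H] in
lemma aux_norm_pr_sq (x y : H) : ‖pr x y‖ ^ 2 = ‖x‖ ^ 2 + ‖y‖ ^ 2 :=
  WithLp.prod_norm_sq_eq_of_L2 _

lemma aux_re_inner_sym {E : Type*} [NormedAddCommGroup E] [InnerProductSpace ℂ E]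
    [CompleteSpace E] (X : E →L[ℂ] E) (v : E) :
    (inner ℂ (sym X v) v : ℂ).re = (inner ℂ (X v) v : ℂ).re := by
  simp only [sym, ContinuousLinearMap.smul_apply, ContinuousLinearMap.add_apply,
    inner_smul_left, inner_add_left, adjoint_inner_left]
  have h : (inner ℂ v (X v) : ℂ).re = (inner ℂ (X v) v : ℂ).re := by
    rw [← inner_conj_symm (X v) v, Complex.conj_re]
  simp [Complex.add_re, Complex.mul_re, h]
  ring

lemma aux_abs_re_inner_le {E : Type*} [NormedAddCommGroup E] [InnerProductSpace ℂ E]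
    [CompleteSpace E] (X : E →L[ℂ] E) (v : E) :
    |(inner ℂ (X v) v : ℂ).re| ≤ ‖X‖ * ‖v‖ ^ 2 := by
  calc |(inner ℂ (X v) v : ℂ).re| ≤ ‖(inner ℂ (X v) v : ℂ)‖ := Complex.abs_re_le_norm _
    _ ≤ ‖X v‖ * ‖v‖ := norm_inner_le_norm _ _
    _ ≤ ‖X‖ * ‖v‖ * ‖v‖ := by
        have := X.le_opNorm v
        have := norm_nonneg v
        nlinarith
    _ = ‖X‖ * ‖v‖ ^ 2 := by ring

lemma aux_re_inner_smul {E : Type*} [NormedAddCommGroup E] [InnerProductSpace ℂ E]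
    (t : ℝ) (x y : E) : (inner ℂ (t • x) y : ℂ).re = t * (inner ℂ x y : ℂ).re := by
  rw [← algebraMap_smul ℂ t x, inner_smul_left]
  simp [Complex.coe_algebraMap, Complex.conj_ofReal, Complex.mul_re]

lemma aux_key (a b a' al : ℕ → H →L[ℂ] H) (n : ℕ)
    (hinv : Inverts (a (n-1)) (a' (n-1))) (hb : IsSelfAdjoint (b n)) (lam : ℝ)
    (p q r : H)
    (hrec : adjoint (a (n-1)) p + b n q + a n r = (lam : ℂ) • q) :
    (inner ℂ (commOp a b al lam n (pr p q)) (pr p q) : ℂ).re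
      = (inner ℂ (climOp a a' b al lam n (pr q r)) (pr q r) : ℂ).re := by
  have h1 : adjoint (a (n-1)) p = (lam:ℂ) • q - b n q - a n r := by
    rw [← hrec]; abel
  have h2 : p = adjoint (a' (n-1)) ((lam:ℂ) • q - b n q - a n r) := by
    rw [← h1, ← ContinuousLinearMap.comp_apply, ← adjoint_comp, hinv.2]
    have h3 : ContinuousLinearMap.adjoint (1 : H →L[ℂ] H) = 1 := ContinuousLinearMap.adjoint_id
    rw [h3, ContinuousLinearMap.one_apply]
  have hsa : adjoint ((lam:ℂ) • (1 : H →L[ℂ] H) - b n) = (lam:ℂ) • (1 : H →L[ℂ] H) - b n := by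
    rw [← ContinuousLinearMap.star_eq_adjoint, star_sub, star_smul, star_one,
      Complex.star_def, Complex.conj_ofReal, hb.star_eq]
  rw [commOp, climOp, aux_re_inner_sym, aux_re_inner_sym, aux_blk_pr, aux_blk_pr,
    aux_inner_pr, aux_inner_pr]
  have e1 : (al (n-1) ∘L adjoint (a (n-1))) p + (-(al (n-1) ∘L ((lam:ℂ) • (1:H →L[ℂ] H) - b n))) q
      = al (n-1) (-(a n r)) := by
    simp only [ContinuousLinearMap.comp_apply, ContinuousLinearMap.neg_apply,
      ContinuousLinearMap.sub_apply, ContinuousLinearMap.smul_apply,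
      ContinuousLinearMap.one_apply, h1, map_sub, map_smul, map_neg]
    abel
  rw [e1, h2]
  have e2 : (inner ℂ (al (n-1) (-(a n r))) (adjoint (a' (n-1)) ((lam:ℂ) • q - b n q - a n r)) : ℂ)
      = inner ℂ (a' (n-1) (al (n-1) (-(a n r)))) ((lam:ℂ) • q - b n q - a n r) := by
    rw [adjoint_inner_right]
  rw [e2]
  have e4 : ∀ w z : H, (inner ℂ (((lam:ℂ) • (1 : H →L[ℂ] H) - b n) w) z : ℂ)
      = inner ℂ w (((lam:ℂ) • (1 : H →L[ℂ] H) - b n) z) := by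
    intro w z
    conv_lhs => rw [← hsa]
    rw [adjoint_inner_left]
  simp only [ContinuousLinearMap.comp_apply, ContinuousLinearMap.neg_apply,
    ContinuousLinearMap.zero_apply, ContinuousLinearMap.add_apply, map_neg,
    inner_neg_left, inner_neg_right, inner_add_left, inner_sub_right, inner_smul_right,
    zero_add, e4, adjoint_inner_left]
  simp only [ContinuousLinearMap.sub_apply, ContinuousLinearMap.smul_apply,
    ContinuousLinearMap.one_apply, inner_sub_right, inner_smul_right, inner_sub_left]
  ring_nf

end AuxiliaryLemmas

set_option maxHeartbeats 1000000 in
set_option synthInstance.maxHeartbeats 400000 in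
/-- Proposition `prop:1`. -/
theorem statement13 (a b a' al : ℕ → H →L[ℂ] H)
    (hinv : ∀ n, Inverts (a n) (a' n)) (hb : ∀ n, IsSelfAdjoint (b n))
    (lam : ℝ)
    (hCl : ∃ Cl : H2 H →L[ℂ] H2 H,
      Tendsto (fun n => ‖(‖al n ∘L adjoint (a n)‖⁻¹ : ℝ) • climOp a a' b al lam n - Cl‖)
        atTop (nhds 0) ∧ StrictlyPos Cl) :
    ∃ N₀ : ℕ, ∃ c₁ > (0 : ℝ), ∃ c₂ > (0 : ℝ),
      ∀ α : H2 H, α ≠ 0 → ∀ u : ℕ → H, GenEigRec a b (lam : ℂ) u → pr (u 0) (u 1) = α →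
        ∀ n : ℕ, N₀ ≤ n →
          c₁ * (‖al n ∘L adjoint (a n)‖ * (‖u n‖ ^ 2 + ‖u (n + 1)‖ ^ 2)) ≤
            commS a b al lam u n ∧
          commS a b al lam u n ≤
            c₂ * (‖al n ∘L adjoint (a n)‖ * (‖u n‖ ^ 2 + ‖u (n + 1)‖ ^ 2)) := by
  obtain ⟨Cl, hten, c, hc, hpos⟩ := hCl
  rcases subsingleton_or_nontrivial H with hH | hH
  · haveI : Subsingleton (H2 H) :=
      (WithLp.equiv 2 (H × H)).subsingleton
    refine ⟨1, 1, one_pos, 1, one_pos, fun α hα u hu hα' n hn => ?_⟩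
    have hS : commS a b al lam u n = 0 := by
      rw [commS, Subsingleton.elim (pr (u (n-1)) (u n)) (0 : H2 H)]
      simp
    rw [hS, Subsingleton.elim (u n) (0 : H), Subsingleton.elim (u (n+1)) (0 : H)]
    norm_num
  · obtain ⟨v, hv⟩ := exists_ne (0 : H2 H)
    have hv2 : 0 < ‖v‖ ^ 2 := pow_pos (norm_pos_iff.mpr hv) 2
    have hcCl : c ≤ ‖Cl‖ := by
      have h1 := hpos v
      have h2 : (inner ℂ (Cl v) v : ℂ).re ≤ ‖Cl‖ * ‖v‖ ^ 2 :=
        le_trans (le_abs_self _) (aux_abs_re_inner_le Cl v)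
      nlinarith
    have hev : ∀ᶠ n in atTop,
        ‖(‖al n ∘L adjoint (a n)‖⁻¹ : ℝ) • climOp a a' b al lam n - Cl‖ < c/2 :=
      hten.eventually (gt_mem_nhds (half_pos hc))
    obtain ⟨N₁, hN₁⟩ := eventually_atTop.mp hev
    refine ⟨max N₁ 1, c/2, half_pos hc, ‖Cl‖ + c/2,
      add_pos_of_nonneg_of_pos (norm_nonneg _) (half_pos hc), ?_⟩
    intro α hα u hu hα' n hn
    have hn1 : 1 ≤ n := le_trans (le_max_right _ _) hn
    have hnN : N₁ ≤ n := le_trans (le_max_left _ _) hn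
    set t : ℝ := ‖al n ∘L adjoint (a n)‖ with ht
    have hDn := hN₁ n hnN
    have ht0 : t ≠ 0 := by
      intro h
      rw [← ht, h, inv_zero] at hDn
      have hz : (0:ℝ) • climOp a a' b al lam n = 0 := by
        ext x
        simp
      rw [hz, zero_sub, norm_neg] at hDn
      linarith
    have htpos : 0 < t := lt_of_le_of_ne (norm_nonneg _) (Ne.symm ht0)
    have hrec : adjoint (a (n-1)) (u (n-1)) + b n (u n) + a n (u (n+1)) = (lam:ℂ) • u n := by
      have h := hu (n-1)
      rw [show n - 1 + 1 = n from Nat.sub_add_cancel hn1,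
        show n - 1 + 2 = n + 1 from by omega] at h
      exact h
    have hkey : commS a b al lam u n
        = (inner ℂ (climOp a a' b al lam n (pr (u n) (u (n+1)))) (pr (u n) (u (n+1))) : ℂ).re := by
      rw [commS]
      exact aux_key a b a' al n (hinv (n-1)) (hb n) lam _ _ _ hrec
    set w : H2 H := pr (u n) (u (n+1)) with hwdef
    have hw : ‖w‖ ^ 2 = ‖u n‖ ^ 2 + ‖u (n+1)‖ ^ 2 := aux_norm_pr_sq _ _
    set D : H2 H →L[ℂ] H2 H := (t⁻¹ : ℝ) • climOp a a' b al lam n - Cl with hD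
    have hdec : (inner ℂ (climOp a a' b al lam n w) w : ℂ).re
        = t * ((inner ℂ (D w) w : ℂ).re + (inner ℂ (Cl w) w : ℂ).re) := by
      have hC : climOp a a' b al lam n = t • (D + Cl) := by
        rw [hD, sub_add_cancel, smul_smul, mul_inv_cancel₀ ht0, one_smul]
      rw [hC]
      simp only [ContinuousLinearMap.smul_apply, ContinuousLinearMap.add_apply]
      rw [aux_re_inner_smul]
      simp [inner_add_left, Complex.add_re, mul_add]
    have hXb : |(inner ℂ (D w) w : ℂ).re| ≤ (c/2) * ‖w‖ ^ 2 := by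
      refine le_trans (aux_abs_re_inner_le D w) ?_
      have := sq_nonneg ‖w‖
      nlinarith
    have hX1 : -((c/2) * ‖w‖ ^ 2) ≤ (inner ℂ (D w) w : ℂ).re := (abs_le.mp hXb).1
    have hX2 : (inner ℂ (D w) w : ℂ).re ≤ (c/2) * ‖w‖ ^ 2 := (abs_le.mp hXb).2
    have hY1 : c * ‖w‖ ^ 2 ≤ (inner ℂ (Cl w) w : ℂ).re := hpos w
    have hY2 : (inner ℂ (Cl w) w : ℂ).re ≤ ‖Cl‖ * ‖w‖ ^ 2 :=
      le_trans (le_abs_self _) (aux_abs_re_inner_le Cl w)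
    constructor
    · rw [hkey, hdec]
      have h5 : (c/2) * ‖w‖ ^ 2 ≤ (inner ℂ (D w) w : ℂ).re + (inner ℂ (Cl w) w : ℂ).re := by
        linarith
      calc c/2 * (t * (‖u n‖ ^ 2 + ‖u (n+1)‖ ^ 2)) = t * ((c/2) * ‖w‖ ^ 2) := by rw [hw]; ring
        _ ≤ t * ((inner ℂ (D w) w : ℂ).re + (inner ℂ (Cl w) w : ℂ).re) :=
            mul_le_mul_of_nonneg_left h5 htpos.le
    · rw [hkey, hdec]
      have h5 : (inner ℂ (D w) w : ℂ).re + (inner ℂ (Cl w) w : ℂ).re ≤ (‖Cl‖ + c/2) * ‖w‖ ^ 2 := by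
        linarith
      calc t * ((inner ℂ (D w) w : ℂ).re + (inner ℂ (Cl w) w : ℂ).re)
          ≤ t * ((‖Cl‖ + c/2) * ‖w‖ ^ 2) := mul_le_mul_of_nonneg_left h5 htpos.le
        _ = (‖Cl‖ + c/2) * (t * (‖u n‖ ^ 2 + ‖u (n+1)‖ ^ 2)) := by rw [hw]; ring
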